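/- arXiv:0708.0213 — 3 statements merged into one kernel-verified Lean document; each statement's English description precedes it below -/
import Mathlib

section
/- Let n, m ≥ 1, let p be a prime, and let k ≥ 1 be such that p^k divides m but p^k does not divide n!. Let U be the representation of S_n on (ℂ^m)^{⊗n} permuting tensor factors. Then for every finite-dimensional irreducible complex representation ρ of S_n, the prime p divides the multiplicity of ρ in U, that is, p divides dim_ℂ Hom_{S_n}(ρ, (ℂ^m)^{⊗n}), the dimension of the space of S_n-equivariant linear maps from ρ to U. -/
open scoped TensorProduct PiTensorProduct

/-- The `n`-fold tensor power of `ℂ^m` carries an `AddCommGroup` structure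
(shortcut instance, definitionally the existing Mathlib one). -/
noncomputable instance tensorPowerAddCommGroup (n m : ℕ) :
    AddCommGroup (⨂[ℂ] _ : Fin n, (Fin m → ℂ)) :=
  PiTensorProduct.instAddCommGroup

/-- A representation `ρ : G →* (W →ₗ[ℂ] W)` is irreducible if `W ≠ 0` and the only
`G`-invariant submodules of `W` are `⊥` and `⊤`. -/
def IsIrreducibleRep {G W : Type*} [Monoid G] [AddCommGroup W] [Module ℂ W]
    (ρ : G →* (W →ₗ[ℂ] W)) : Prop :=
  Nontrivial W ∧
    ∀ p : Submodule ℂ W, (∀ g : G, p.map (ρ g) ≤ p) → p = ⊥ ∨ p = ⊤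

/-- The space of `G`-equivariant linear maps from the representation `ρ` on `W` to the
representation `U` on `T`, as a submodule of `W →ₗ[ℂ] T`. -/
def equivariantMaps {G W T : Type*} [AddCommGroup W] [Module ℂ W]
    [AddCommGroup T] [Module ℂ T]
    (ρ : G → (W →ₗ[ℂ] W)) (U : G → (T →ₗ[ℂ] T)) : Submodule ℂ (W →ₗ[ℂ] T) where
  carrier := {f | ∀ g : G, f ∘ₗ ρ g = U g ∘ₗ f}
  add_mem' := by
    intro a b ha hb g
    simp [LinearMap.add_comp, LinearMap.comp_add, ha g, hb g]
  zero_mem' := by intro g; simp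
  smul_mem' := by
    intro c x hx g
    simp [LinearMap.smul_comp, LinearMap.comp_smul, hx g]

namespace Stmt3Aux

/-! ### The quotient of `Fin n → Fin m` by precomposition with permutations -/

def pSetoid (n m : ℕ) : Setoid (Fin n → Fin m) where
  r f f' := ∃ g : Equiv.Perm (Fin n), f' = fun i => f (g i)
  iseqv := by
    refine ⟨fun f => ⟨1, by simp⟩, ?_, ?_⟩
    · rintro f f' ⟨g, rfl⟩
      exact ⟨g⁻¹, by funext i; simp⟩
    · rintro a b c ⟨g, rfl⟩ ⟨h, rfl⟩
      exact ⟨g * h, by funext i; simp [Equiv.Perm.mul_apply]⟩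

instance (n m : ℕ) : DecidableRel (pSetoid n m).r :=
  fun _ _ => Fintype.decidableExistsFintype

def Q (n m : ℕ) : Type := Quotient (pSetoid n m)

instance (n m : ℕ) : Fintype (Q n m) :=
  @Quotient.fintype _ _ (pSetoid n m) (fun _ _ => Fintype.decidableExistsFintype)

instance (n m : ℕ) : DecidableEq (Q n m) :=
  @Quotient.decidableEq _ (pSetoid n m) (fun _ _ => Fintype.decidableExistsFintype)

variable {n m : ℕ}

def Qmk (f : Fin n → Fin m) : Q n m := Quotient.mk (pSetoid n m) f

lemma Qmk_comp_perm (f : Fin n → Fin m) (g : Equiv.Perm (Fin n)) :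
    Qmk (fun i => f (g i)) = Qmk f :=
  (Quotient.sound (⟨g, rfl⟩ : (pSetoid n m).r f (fun i => f (g i)))).symm

instance : SMul (Equiv.Perm (Fin m)) (Q n m) where
  smul π := Quotient.map (fun f => fun i => π (f i))
    (fun f f' h => by obtain ⟨g, rfl⟩ := h; exact ⟨g, rfl⟩)

lemma smul_Qmk (π : Equiv.Perm (Fin m)) (f : Fin n → Fin m) :
    π • (Qmk f : Q n m) = Qmk (fun i => π (f i)) := rfl

instance : MulAction (Equiv.Perm (Fin m)) (Q n m) where
  one_smul q := by
    refine Quotient.inductionOn q fun f => ?_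
    show Qmk (fun i => (1 : Equiv.Perm (Fin m)) (f i)) = Qmk f
    simp
  mul_smul π σ q := by
    refine Quotient.inductionOn q fun f => ?_
    show Qmk (fun i => (π * σ) (f i)) = Qmk (fun i => π (σ (f i)))
    simp [Equiv.Perm.mul_apply]

/-! ### Generic counting lemma -/

theorem dvd_sum_of_orbits {G Qt : Type*} [Group G] [Fintype G] [Fintype Qt] [DecidableEq Qt]
    [MulAction G Qt] (d : Qt → ℕ) (hd : ∀ (g : G) (v : Qt), d (g • v) = d v) {p : ℕ}
    (hp : ∀ v : Qt, p ∣ Nat.card (MulAction.orbit G v)) :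
    p ∣ ∑ v : Qt, d v := by
  classical
  suffices H : ∀ s : Finset Qt, (∀ (g : G) (v : Qt), v ∈ s → g • v ∈ s) → p ∣ ∑ v ∈ s, d v from
    H Finset.univ (fun _ _ _ => Finset.mem_univ _)
  intro s
  induction s using Finset.strongInduction with
  | _ s ih =>
    intro hs
    rcases s.eq_empty_or_nonempty with rfl | ⟨v, hv⟩
    · simp
    have hOcard : MulAction.orbit G v = ↑(Finset.image (fun g : G => g • v) Finset.univ) := by
      ext x
      simp [MulAction.mem_orbit_iff, eq_comm]
    set O : Finset Qt := Finset.image (fun g : G => g • v) Finset.univ with hO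
    have hOs : O ⊆ s := by
      intro x hx
      obtain ⟨g, -, rfl⟩ := Finset.mem_image.1 hx
      exact hs g v hv
    have hsplit : ∑ x ∈ s \ O, d x + ∑ x ∈ O, d x = ∑ x ∈ s, d x := Finset.sum_sdiff hOs
    have hdO : p ∣ ∑ x ∈ O, d x := by
      have : ∑ x ∈ O, d x = O.card * d v := by
        rw [Finset.sum_congr rfl (fun x hx => ?_), Finset.sum_const, smul_eq_mul]
        obtain ⟨g, -, rfl⟩ := Finset.mem_image.1 hx
        exact hd g v
      rw [this]
      refine Dvd.dvd.mul_right ?_ _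
      have hcard : Nat.card (MulAction.orbit G v) = O.card := by
        rw [hOcard, Nat.card_coe_set_eq, Set.ncard_coe_finset]
      exact hcard ▸ hp v
    have hvO : v ∈ O := Finset.mem_image.2 ⟨1, Finset.mem_univ _, one_smul G v⟩
    have hss : s \ O ⊂ s := by
      refine Finset.ssubset_iff_of_subset (Finset.sdiff_subset) |>.2 ⟨v, hv, ?_⟩
      simp [hvO]
    have hclosed : ∀ (g : G) (x : Qt), x ∈ s \ O → g • x ∈ s \ O := by
      intro g x hx
      rw [Finset.mem_sdiff] at hx ⊢
      refine ⟨hs g x hx.1, fun hmem => hx.2 ?_⟩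
      obtain ⟨h, -, hh⟩ := Finset.mem_image.1 hmem
      refine Finset.mem_image.2 ⟨g⁻¹ * h, Finset.mem_univ _, ?_⟩
      rw [mul_smul, hh, inv_smul_smul]
    have hrest := ih (s \ O) hss hclosed
    rw [← hsplit]
    exact dvd_add hrest hdO

/-! ### Arithmetic: `p` divides the binomial coefficient -/

theorem p_dvd_choose {p k m r n : ℕ} (hp : p.Prime) (hdvd : p ^ k ∣ m)
    (hndvd : ¬ p ^ k ∣ Nat.factorial n) (hr1 : 1 ≤ r) (hrn : r ≤ n) (hm1 : 1 ≤ m) :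
    p ∣ m.choose r := by
  by_contra hnd
  have hcop : Nat.Coprime (p ^ k) (m.choose r) :=
    Nat.Coprime.pow_left _ ((Nat.Prime.coprime_iff_not_dvd hp).2 hnd)
  have hid : m * Nat.choose (m - 1) (r - 1) = Nat.choose m r * r := by
    have h := Nat.add_one_mul_choose_eq (m - 1) (r - 1)
    have e1 : m - 1 + 1 = m := by omega
    have e2 : r - 1 + 1 = r := by omega
    simp only [Nat.succ_eq_add_one, e1, e2] at h
    exact h
  have h1 : p ^ k ∣ Nat.choose m r * r := hid ▸ (hdvd.mul_right _)
  have h2 : p ^ k ∣ r := (Nat.Coprime.dvd_of_dvd_mul_left hcop h1)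
  exact hndvd (h2.trans (Nat.dvd_factorial hr1 hrn))

/-! ### The key divisibility of orbit sizes -/

theorem p_dvd_card_orbit {p k : ℕ} (hp : p.Prime) (hn : 1 ≤ n) (hm : 1 ≤ m)
    (hdvd : p ^ k ∣ m) (hndvd : ¬ p ^ k ∣ Nat.factorial n) (v : Q n m) :
    p ∣ Nat.card (MulAction.orbit (Equiv.Perm (Fin m)) v) := by
  classical
  obtain ⟨f, rfl⟩ : ∃ f, Qmk f = v := ⟨v.out, Quotient.out_eq v⟩
  set I : Finset (Fin m) := Finset.image f Finset.univ with hI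
  haveI : Nonempty (Fin n) := Fin.pos_iff_nonempty.1 hn
  have hr1 : 1 ≤ I.card :=
    Finset.card_pos.2 (Finset.Nonempty.image Finset.univ_nonempty f)
  have hrn : I.card ≤ n := le_trans Finset.card_image_le (by simp)
  have hrm : I.card ≤ m := le_trans (Finset.card_le_univ I) (by simp)
  have key : ∀ π : Equiv.Perm (Fin m), π ∈ MulAction.stabilizer (Equiv.Perm (Fin m)) (Qmk f) →
      ∀ x ∈ I, π x ∈ I := by
    intro π hπ x hx
    have hπ' : Qmk (fun i => π (f i)) = Qmk f := hπ
    obtain ⟨g, hg⟩ := Quotient.exact hπ'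
    obtain ⟨i, -, rfl⟩ := Finset.mem_image.1 hx
    have h2 := congrFun hg (g⁻¹ i)
    simp only [← Equiv.Perm.mul_apply, mul_inv_cancel, Equiv.Perm.one_apply] at h2
    rw [← h2]
    exact Finset.mem_image_of_mem f (Finset.mem_univ _)
  have key2 : ∀ π : Equiv.Perm (Fin m), π ∈ MulAction.stabilizer (Equiv.Perm (Fin m)) (Qmk f) →
      ∀ x, x ∈ I ↔ π x ∈ I := by
    intro π hπ x
    refine ⟨fun h => key π hπ x h, fun h => ?_⟩
    have := key π⁻¹ (inv_mem hπ) (π x) h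
    simpa using this
  set stab := MulAction.stabilizer (Equiv.Perm (Fin m)) (Qmk f : Q n m) with hstab
  let Φ : stab →* Equiv.Perm {x // x ∈ I} × Equiv.Perm {x // ¬ x ∈ I} :=
    { toFun := fun σ => (σ.1.subtypePerm (fun x => (key2 σ.1 σ.2 x).symm),
        σ.1.subtypePerm (fun x => not_iff_not.2 (key2 σ.1 σ.2 x).symm))
      map_one' := by
        refine Prod.ext ?_ ?_ <;> · apply Equiv.ext; intro x; apply Subtype.ext; rfl
      map_mul' := fun σ τ => by
        refine Prod.ext ?_ ?_ <;> · apply Equiv.ext; intro x; apply Subtype.ext; rfl }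
  have hΦinj : Function.Injective Φ := by
    intro σ τ h
    rw [Prod.ext_iff] at h
    refine Subtype.ext (Equiv.ext fun x => ?_)
    by_cases hx : x ∈ I
    · have := DFunLike.congr_fun h.1 ⟨x, hx⟩
      rw [Subtype.ext_iff] at this
      simpa [Φ] using this
    · have := DFunLike.congr_fun h.2 ⟨x, hx⟩
      rw [Subtype.ext_iff] at this
      simpa [Φ] using this
  have hdvd1 : Nat.card stab ∣ Nat.card (Equiv.Perm {x // x ∈ I} × Equiv.Perm {x // ¬ x ∈ I}) :=
    Subgroup.card_dvd_of_injective Φ hΦinj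
  have hcard2 : Nat.card (Equiv.Perm {x // x ∈ I} × Equiv.Perm {x // ¬ x ∈ I})
      = Nat.factorial I.card * Nat.factorial (m - I.card) := by
    rw [Nat.card_eq_fintype_card, Fintype.card_prod, Fintype.card_perm, Fintype.card_perm,
      Fintype.card_coe, Fintype.card_subtype_compl, Fintype.card_coe, Fintype.card_fin]
  haveI : Fintype (MulAction.orbit (Equiv.Perm (Fin m)) (Qmk f : Q n m)) := Fintype.ofFinite _
  haveI : Fintype stab := Fintype.ofFinite _
  have hos := MulAction.card_orbit_mul_card_stabilizer_eq_card_group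
    (G := Equiv.Perm (Fin m)) (Qmk f : Q n m)
  rw [Fintype.card_perm, Fintype.card_fin] at hos
  have hos' : Nat.card (MulAction.orbit (Equiv.Perm (Fin m)) (Qmk f : Q n m)) * Nat.card stab
      = Nat.factorial m := by
    rw [Nat.card_eq_fintype_card, Nat.card_eq_fintype_card]
    exact hos
  obtain ⟨s, hs⟩ := hdvd1
  rw [hcard2] at hs
  have hchoose := Nat.choose_mul_factorial_mul_factorial hrm
  have hcspos : 0 < Nat.card stab := Nat.card_pos
  have hkey : Nat.card (MulAction.orbit (Equiv.Perm (Fin m)) (Qmk f : Q n m))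
      = Nat.choose m I.card * s := by
    have h3 : Nat.card (MulAction.orbit (Equiv.Perm (Fin m)) (Qmk f : Q n m)) * Nat.card stab
        = (Nat.choose m I.card * s) * Nat.card stab := by
      rw [hos', ← hchoose, mul_assoc, hs]
      ring
    exact Nat.eq_of_mul_eq_mul_right hcspos h3
  rw [hkey]
  exact Dvd.dvd.mul_right (p_dvd_choose hp hdvd hndvd hr1 hrn hm) s

/-! ### The coefficient model of the space of equivariant maps -/

section Coeff

variable (n m : ℕ) (W : Type*) [AddCommGroup W] [Module ℂ W]
  (ρ : Equiv.Perm (Fin n) →* (W →ₗ[ℂ] W))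

/-- The submodule of coefficient families satisfying the equivariance constraints. -/
noncomputable def CC : Submodule ℂ ((Fin n → Fin m) → (W →ₗ[ℂ] ℂ)) where
  carrier := {c | ∀ (f : Fin n → Fin m) (g : Equiv.Perm (Fin n)),
    (c f) ∘ₗ ρ g = c (fun i => f (g⁻¹ i))}
  add_mem' := by
    intro a b ha hb f g
    simp [LinearMap.add_comp, ha f g, hb f g]
  zero_mem' := by intro f g; simp
  smul_mem' := by
    intro t c hc f g
    simp [LinearMap.smul_comp, hc f g]

/-- Families supported on the class `v`. -/
noncomputable def SV (v : Q n m) : Submodule ℂ ((Fin n → Fin m) → (W →ₗ[ℂ] ℂ)) where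
  carrier := {c | ∀ f : Fin n → Fin m, Qmk f ≠ v → c f = 0}
  add_mem' := by
    intro a b ha hb f hf
    simp [ha f hf, hb f hf]
  zero_mem' := by intro f _; rfl
  smul_mem' := by
    intro t c hc f hf
    simp [hc f hf]

noncomputable def Cv (v : Q n m) : Submodule ℂ ((Fin n → Fin m) → (W →ₗ[ℂ] ℂ)) :=
  CC n m W ρ ⊓ SV n m W v

lemma Qmk_inv_comp (f : Fin n → Fin m) (g : Equiv.Perm (Fin n)) :
    Qmk (fun i => f (g⁻¹ i)) = Qmk f :=
  Qmk_comp_perm f g⁻¹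

/-- Decomposition of `CC` according to supports. -/
noncomputable def decompEquiv : CC n m W ρ ≃ₗ[ℂ] ((v : Q n m) → Cv n m W ρ v) where
  toFun c v := by
    refine ⟨fun f => if Qmk f = v then c.1 f else 0, ?_, ?_⟩
    · intro f g
      show (if Qmk f = v then c.1 f else 0) ∘ₗ ρ g
        = if Qmk (fun i => f (g⁻¹ i)) = v then c.1 (fun i => f (g⁻¹ i)) else 0
      rw [Qmk_inv_comp]
      by_cases h : Qmk f = v
      · simp only [h, if_pos rfl]
        exact c.2 f g
      · simp only [if_neg h, LinearMap.zero_comp]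
    · intro f hf
      simp [if_neg hf]
  map_add' c c' := by
    funext v
    apply Subtype.ext
    funext f
    show (if Qmk f = v then (c.1 + c'.1) f else 0) = _
    by_cases h : Qmk f = v <;> simp [h]
  map_smul' t c := by
    funext v
    apply Subtype.ext
    funext f
    show (if Qmk f = v then (t • c.1) f else 0) = _
    by_cases h : Qmk f = v <;> simp [h]
  invFun fam := by
    refine ⟨fun f => (fam (Qmk f)).1 f, ?_⟩
    intro f g
    have hmem : (fam (Qmk f)).1 ∈ CC n m W ρ ∧ (fam (Qmk f)).1 ∈ SV n m W (Qmk f) :=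
      Submodule.mem_inf.mp (fam (Qmk f)).2
    show (fam (Qmk f)).1 f ∘ₗ ρ g = (fam (Qmk (fun i => f (g⁻¹ i)))).1 (fun i => f (g⁻¹ i))
    rw [Qmk_inv_comp]
    exact hmem.1 f g
  left_inv c := by
    apply Subtype.ext
    funext f
    show (if Qmk f = Qmk f then c.1 f else 0) = c.1 f
    simp
  right_inv fam := by
    funext v
    apply Subtype.ext
    funext f
    show (if Qmk f = v then (fam (Qmk f)).1 f else 0) = (fam v).1 f
    by_cases h : Qmk f = v
    · subst h; simp
    · have hmem : (fam v).1 ∈ CC n m W ρ ∧ (fam v).1 ∈ SV n m W v :=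
        Submodule.mem_inf.mp (fam v).2
      rw [if_neg h, hmem.2 f h]

/-- Translation by a permutation of colours. -/
noncomputable def translateEquiv (π : Equiv.Perm (Fin m)) (v : Q n m) :
    Cv n m W ρ v ≃ₗ[ℂ] Cv n m W ρ (π • v) where
  toFun c := by
    refine ⟨fun f => c.1 (fun i => π⁻¹ (f i)), ?_, ?_⟩
    · intro f g
      exact c.2.1 (fun i => π⁻¹ (f i)) g
    · intro f hf
      refine c.2.2 (fun i => π⁻¹ (f i)) fun heq => hf ?_
      have : π • Qmk (fun i => π⁻¹ (f i)) = π • v := by rw [heq]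
      rw [smul_Qmk] at this
      simpa using this
  map_add' c c' := rfl
  map_smul' t c := rfl
  invFun c := by
    refine ⟨fun f => c.1 (fun i => π (f i)), ?_, ?_⟩
    · intro f g
      exact c.2.1 (fun i => π (f i)) g
    · intro f hf
      refine c.2.2 (fun i => π (f i)) fun heq => hf ?_
      rw [show Qmk (fun i => π (f i)) = π • Qmk f from rfl] at heq
      exact smul_left_cancel π heq
  left_inv c := by
    apply Subtype.ext
    funext f
    simp
  right_inv c := by
    apply Subtype.ext
    funext f
    simp

end Coeff

/-! ### Coordinates on the tensor power -/

section Tensor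

variable (n m : ℕ)

/-- The coordinate functional attached to `f : Fin n → Fin m`. -/
noncomputable def coordL (f : Fin n → Fin m) :
    (⨂[ℂ] _ : Fin n, (Fin m → ℂ)) →ₗ[ℂ] ℂ :=
  PiTensorProduct.lift
    ((MultilinearMap.mkPiAlgebra ℂ (Fin n) ℂ).compLinearMap (fun i => LinearMap.proj (f i)))

/-- The basis vector attached to `f : Fin n → Fin m`. -/
noncomputable def bvec (f : Fin n → Fin m) : ⨂[ℂ] _ : Fin n, (Fin m → ℂ) :=
  PiTensorProduct.tprod ℂ (fun i => Pi.single (f i) (1 : ℂ))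

lemma coordL_tprod (f : Fin n → Fin m) (ξ : Fin n → (Fin m → ℂ)) :
    coordL n m f (PiTensorProduct.tprod ℂ ξ) = ∏ i, ξ i (f i) := by
  simp [coordL]

lemma coordL_bvec (f h : Fin n → Fin m) :
    coordL n m f (bvec n m h) = if h = f then 1 else 0 := by
  rw [bvec, coordL_tprod]
  by_cases hfh : h = f
  · subst hfh
    simp
  · rw [if_neg hfh]
    obtain ⟨i, hi⟩ := Function.ne_iff.1 hfh
    refine Finset.prod_eq_zero (Finset.mem_univ i) ?_
    rw [Pi.single_apply, if_neg (fun e => hi e.symm)]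

set_option synthInstance.maxHeartbeats 400000 in
lemma span_bvec : Submodule.span ℂ (Set.range (bvec n m)) = ⊤ := by
  rw [eq_top_iff, ← PiTensorProduct.span_tprod_eq_top]
  refine Submodule.span_le.2 ?_
  rintro x ⟨ξ, rfl⟩
  have hξ : ξ = fun i => ∑ j : Fin m, ξ i j • (Pi.single j (1 : ℂ) : Fin m → ℂ) := by
    funext i a
    simp only [Finset.sum_apply, Pi.smul_apply, Pi.single_apply, smul_eq_mul, mul_ite,
      mul_one, mul_zero]
    rw [Finset.sum_ite_eq Finset.univ a (fun j => ξ i j)]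
    simp
  have hexp : PiTensorProduct.tprod ℂ ξ
      = ∑ f : Fin n → Fin m, (∏ i, ξ i (f i)) • bvec n m f := by
    conv_lhs => rw [hξ]
    rw [MultilinearMap.map_sum]
    refine Finset.sum_congr rfl fun f _ => ?_
    rw [MultilinearMap.map_smul_univ]
    rfl
  rw [hexp]
  exact Submodule.sum_mem _ fun f _ =>
    Submodule.smul_mem _ _ (Submodule.subset_span ⟨f, rfl⟩)

/-- Joint injectivity of the coordinates. -/
lemma coordL_injective (x y : ⨂[ℂ] _ : Fin n, (Fin m → ℂ))
    (h : ∀ f, coordL n m f x = coordL n m f y) : x = y := by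
  have hx : x - y ∈ (⊤ : Submodule ℂ (⨂[ℂ] _ : Fin n, (Fin m → ℂ))) := trivial
  rw [← span_bvec, Submodule.mem_span_range_iff_exists_fun] at hx
  obtain ⟨c, hc⟩ := hx
  have hzero : ∀ f₀, coordL n m f₀ (x - y) = 0 := by
    intro f₀
    rw [map_sub, h f₀, sub_self]
  have hcoef : ∀ f₀, c f₀ = 0 := by
    intro f₀
    have := hzero f₀
    rw [← hc, map_sum] at this
    simp only [map_smul, coordL_bvec, smul_eq_mul, mul_ite, mul_one, mul_zero] at this
    rwa [Finset.sum_ite_eq' Finset.univ f₀ c, if_pos (Finset.mem_univ _)] at this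
  have : x - y = 0 := by
    rw [← hc]
    simp [hcoef]
  exact sub_eq_zero.mp this

end Tensor

section Main

variable (n m : ℕ)

/-- The coordinate isomorphism `(ℂ^m)^{⊗ n} ≃ ((Fin n → Fin m) → ℂ)`. -/
noncomputable def EQmap : (⨂[ℂ] _ : Fin n, (Fin m → ℂ)) →ₗ[ℂ] ((Fin n → Fin m) → ℂ) :=
  LinearMap.pi (coordL n m)

lemma EQmap_bijective : Function.Bijective (EQmap n m) := by
  constructor
  · intro x y hxy
    exact coordL_injective n m x y fun f => congrFun hxy f
  · intro ψ
    refine ⟨∑ h : Fin n → Fin m, ψ h • bvec n m h, ?_⟩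
    funext f
    simp only [EQmap, LinearMap.pi_apply, map_sum, map_smul, coordL_bvec, smul_eq_mul,
      mul_ite, mul_one, mul_zero]
    rw [Finset.sum_ite_eq' Finset.univ f ψ, if_pos (Finset.mem_univ _)]

noncomputable def EQ : (⨂[ℂ] _ : Fin n, (Fin m → ℂ)) ≃ₗ[ℂ] ((Fin n → Fin m) → ℂ) :=
  LinearEquiv.ofBijective (EQmap n m) (EQmap_bijective n m)

variable (W : Type*) [AddCommGroup W] [Module ℂ W]

/-- `Hom(W, X → ℂ) ≃ (X → Hom(W, ℂ))`. -/
noncomputable def homPiEquiv :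
    (W →ₗ[ℂ] ((Fin n → Fin m) → ℂ)) ≃ₗ[ℂ] ((Fin n → Fin m) → (W →ₗ[ℂ] ℂ)) where
  toFun φ := fun f => LinearMap.proj f ∘ₗ φ
  map_add' φ ψ := by funext f; ext w; rfl
  map_smul' t φ := by funext f; ext w; rfl
  invFun c := LinearMap.pi c
  left_inv φ := by ext w; rfl
  right_inv c := by funext f; ext w; rfl

/-- The full coordinate isomorphism on Hom spaces. -/
noncomputable def bigE :
    (W →ₗ[ℂ] (⨂[ℂ] _ : Fin n, (Fin m → ℂ))) ≃ₗ[ℂ] ((Fin n → Fin m) → (W →ₗ[ℂ] ℂ)) :=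
  (LinearEquiv.arrowCongr (LinearEquiv.refl ℂ W) (EQ n m)).trans (homPiEquiv n m W)

lemma bigE_apply (φ : W →ₗ[ℂ] (⨂[ℂ] _ : Fin n, (Fin m → ℂ))) (f : Fin n → Fin m) (w : W) :
    bigE n m W φ f w = coordL n m f (φ w) := rfl

end Main

section Transport

variable {n m : ℕ}

lemma coordL_comp_U
    (U : Equiv.Perm (Fin n) →
      ((⨂[ℂ] _ : Fin n, (Fin m → ℂ)) →ₗ[ℂ] ⨂[ℂ] _ : Fin n, (Fin m → ℂ)))
    (hU : ∀ (g : Equiv.Perm (Fin n)) (ξ : Fin n → (Fin m → ℂ)),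
      U g (PiTensorProduct.tprod ℂ ξ) = PiTensorProduct.tprod ℂ (fun i => ξ (g i)))
    (g : Equiv.Perm (Fin n)) (f : Fin n → Fin m) :
    (coordL n m f) ∘ₗ (U g) = coordL n m (fun i => f (g⁻¹ i)) := by
  apply LinearMap.ext_on (span_bvec n m)
  rintro x ⟨h, rfl⟩
  have hUb : U g (bvec n m h) = bvec n m (fun i => h (g i)) := hU g _
  simp only [LinearMap.comp_apply, hUb, coordL_bvec]
  refine if_congr ?_ rfl rfl
  constructor
  · rintro rfl
    funext i
    simp
  · rintro rfl
    funext i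
    simp

end Transport

end Stmt3Aux

open Stmt3Aux Module

/-- Let `n, m ≥ 1`, `p` prime and `k ≥ 1` with `p^k ∣ m` and `p^k ∤ n!`.
Let `U` be the representation of `S_n` on `(ℂ^m)^{⊗n}` permuting tensor factors:
`U_g (ξ_1 ⊗ ⋯ ⊗ ξ_n) = ξ_{g(1)} ⊗ ⋯ ⊗ ξ_{g(n)}`. Then for every finite-dimensional
irreducible complex representation `ρ` of `S_n`, the prime `p` divides the multiplicity
of `ρ` in `U`, i.e. the dimension of the space of `S_n`-equivariant linear maps
from `ρ` to `U`. -/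
theorem prime_dvd_multiplicity (n m p k : ℕ) (hn : 1 ≤ n) (hm : 1 ≤ m)
    (hp : p.Prime) (hk : 1 ≤ k) (hdvd : p ^ k ∣ m) (hndvd : ¬ (p ^ k ∣ Nat.factorial n))
    (U : Equiv.Perm (Fin n) →
      ((⨂[ℂ] _ : Fin n, (Fin m → ℂ)) →ₗ[ℂ] ⨂[ℂ] _ : Fin n, (Fin m → ℂ)))
    (hU : ∀ (g : Equiv.Perm (Fin n)) (ξ : Fin n → (Fin m → ℂ)),
      U g (PiTensorProduct.tprod ℂ ξ) = PiTensorProduct.tprod ℂ (fun i => ξ (g i)))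
    (W : Type*) [AddCommGroup W] [Module ℂ W] [FiniteDimensional ℂ W]
    (ρ : Equiv.Perm (Fin n) →* (W →ₗ[ℂ] W)) (hρ : IsIrreducibleRep ρ) :
    p ∣ Module.finrank ℂ (equivariantMaps (fun g => ρ g) U) := by
  classical
  have memiff : ∀ φ : W →ₗ[ℂ] (⨂[ℂ] _ : Fin n, (Fin m → ℂ)),
      φ ∈ equivariantMaps (fun g => ρ g) U ↔ bigE n m W φ ∈ CC n m W ρ := by
    intro φ
    constructor
    · intro hφ f g
      ext w
      have h1 : φ (ρ g w) = U g (φ w) := LinearMap.congr_fun (hφ g) w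
      have h2 := LinearMap.congr_fun (coordL_comp_U U hU g f) (φ w)
      simp only [LinearMap.comp_apply] at h2 ⊢
      rw [bigE_apply, bigE_apply, h1, h2]
    · intro hc g
      ext w
      apply coordL_injective
      intro f
      have h2 := LinearMap.congr_fun (coordL_comp_U U hU g f) (φ w)
      have h3 := LinearMap.congr_fun (hc f g) w
      simp only [LinearMap.comp_apply] at h2 h3 ⊢
      rw [bigE_apply, bigE_apply] at h3
      rw [h3, h2]
  have hmap : (equivariantMaps (fun g => ρ g) U).map (bigE n m W : _ →ₗ[ℂ] _)
      = CC n m W ρ := by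
    apply le_antisymm
    · rintro _ ⟨φ, hφ, rfl⟩
      exact (memiff φ).1 hφ
    · intro c hc
      refine ⟨(bigE n m W).symm c, (memiff _).2 ?_, by simp⟩
      rwa [LinearEquiv.apply_symm_apply]
  have h1 : finrank ℂ (equivariantMaps (fun g => ρ g) U) = finrank ℂ (CC n m W ρ) := by
    rw [← hmap, LinearEquiv.finrank_map_eq]
  have h2 : finrank ℂ (CC n m W ρ) = ∑ v : Q n m, finrank ℂ (Cv n m W ρ v) := by
    rw [(decompEquiv n m W ρ).finrank_eq]
    exact Module.finrank_pi_fintype ℂ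
  rw [h1, h2]
  exact dvd_sum_of_orbits (fun v => finrank ℂ (Cv n m W ρ v))
    (fun π v => ((translateEquiv n m W ρ π v).finrank_eq).symm)
    (fun v => p_dvd_card_orbit hp hn hm hdvd hndvd v)
end

section
/- Let n ≥ 1 and let p be a prime with p > n. Consider the n-fold tensor power M_p(ℂ)^{⊗n} over ℂ of the p×p complex matrix algebra, with the action of the symmetric group S_n by ℂ-algebra automorphisms permuting the tensor factors: α_g(a_1 ⊗ a_2 ⊗ ··· ⊗ a_n) = a_{g(1)} ⊗ a_{g(2)} ⊗ ··· ⊗ a_{g(n)}. Then there exists an injective unital ℂ-algebra homomorphism from M_p(ℂ) into the fixed-point subalgebra (M_p(ℂ)^{⊗n})^{S_n} = {x ∈ M_p(ℂ)^{⊗n} : α_g(x) = x for all g ∈ S_n}. -/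
open scoped TensorProduct PiTensorProduct

noncomputable section MatFixAux

open Finset

/-- primitive `p`-th root of unity -/
def mFω (p : ℕ) : ℂ := Complex.exp (2 * Real.pi * Complex.I / p)

lemma mFω_prim (p : ℕ) (hp : p ≠ 0) : IsPrimitiveRoot (mFω p) p :=
  Complex.isPrimitiveRoot_exp p hp

lemma mFω_pow_p (p : ℕ) (hp : p ≠ 0) : mFω p ^ p = 1 := (mFω_prim p hp).pow_eq_one

lemma mFω_ne_zero (p : ℕ) : mFω p ≠ 0 := Complex.exp_ne_zero _

lemma mFω_pow_mod (p : ℕ) (hp : p ≠ 0) (m : ℕ) : mFω p ^ (m % p) = mFω p ^ m := by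
  conv_rhs => rw [← Nat.div_add_mod m p]
  rw [pow_add, pow_mul, mFω_pow_p p hp, one_pow, one_mul]

lemma mFω_pow_congr (p : ℕ) (hp : p ≠ 0) {a b : ℕ} (h : a ≡ b [MOD p]) :
    mFω p ^ a = mFω p ^ b := by
  rw [← mFω_pow_mod p hp a, ← mFω_pow_mod p hp b, h]

lemma mF_geom_sum_zero (p : ℕ) {z : ℂ} (h1 : z ^ p = 1) (h2 : z ≠ 1) :
    ∑ i ∈ Finset.range p, z ^ i = 0 := by
  have h := geom_sum_mul z p
  rw [h1, sub_self] at h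
  rcases mul_eq_zero.mp h with h | h
  · exact h
  · exact absurd (sub_eq_zero.mp h) h2

/-- orthogonality of characters -/
lemma mFω_ortho (p : ℕ) (hp : p ≠ 0) (s t : Fin p) :
    ∑ b : Fin p, mFω p ^ (b.val * s.val) * (mFω p)⁻¹ ^ (b.val * t.val)
      = if s = t then (p : ℂ) else 0 := by
  set ω := mFω p with hω
  have hterm : ∀ b : Fin p,
      ω ^ (b.val * s.val) * ω⁻¹ ^ (b.val * t.val) = (ω ^ s.val * ω⁻¹ ^ t.val) ^ b.val := by
    intro b
    rw [mul_comm b.val s.val, mul_comm b.val t.val, pow_mul, pow_mul, mul_pow]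
  simp only [hterm]
  rw [Fin.sum_univ_eq_sum_range (fun i => (ω ^ s.val * ω⁻¹ ^ t.val) ^ i)]
  by_cases hst : s = t
  · subst hst
    have h1 : ω ^ s.val * ω⁻¹ ^ s.val = 1 := by
      rw [← mul_pow, mul_inv_cancel₀ (mFω_ne_zero p), one_pow]
    rw [if_pos rfl, h1]
    simp
  · have hz1 : (ω ^ s.val * ω⁻¹ ^ t.val) ^ p = 1 := by
      rw [mul_pow, ← pow_mul, ← pow_mul, mul_comm s.val p, mul_comm t.val p,
        pow_mul, pow_mul, mFω_pow_p p hp, inv_pow, mFω_pow_p p hp, one_pow,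
        inv_one, one_pow, one_mul]
    have hz2 : ω ^ s.val * ω⁻¹ ^ t.val ≠ 1 := by
      intro h
      rw [inv_pow] at h
      have : ω ^ s.val = ω ^ t.val :=
        (mul_inv_eq_one₀ (pow_ne_zero _ (mFω_ne_zero p))).mp h
      exact hst (Fin.ext ((mFω_prim p hp).pow_inj s.isLt t.isLt this))
    rw [if_neg hst]
    exact mF_geom_sum_zero p hz1 hz2

/-- Weyl clock-and-shift matrices -/
def mFw (p : ℕ) [NeZero p] (a b : Fin p) : Matrix (Fin p) (Fin p) ℂ :=
  Matrix.of fun i j => if i = j + a then mFω p ^ (b.val * j.val) else 0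

lemma mFw_zero_zero (p : ℕ) [NeZero p] : mFw p 0 0 = 1 := by
  ext i j
  simp [mFw, Matrix.one_apply]

lemma mFw_mul (p : ℕ) [NeZero p] (a b c d : Fin p) :
    mFw p a b * mFw p c d = mFω p ^ (b.val * c.val) • mFw p (a + c) (b + d) := by
  have hp : p ≠ 0 := NeZero.ne p
  ext i j
  rw [Matrix.mul_apply, Matrix.smul_apply]
  simp only [mFw, Matrix.of_apply, mul_ite, ite_mul, mul_zero, zero_mul, smul_eq_mul]
  rw [Finset.sum_ite_eq' Finset.univ (j + c)
    (fun l => if i = l + a then mFω p ^ (b.val * l.val) * mFω p ^ (d.val * j.val) else 0)]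
  simp only [Finset.mem_univ, if_true]
  have hiff : i = j + c + a ↔ i = j + (a + c) := by
    rw [add_assoc, add_comm c a]
  by_cases h : i = j + (a + c)
  · rw [if_pos (hiff.mpr h), if_pos h, ← pow_add, ← pow_add]
    apply mFω_pow_congr p hp
    apply (ZMod.natCast_eq_natCast_iff _ _ _).mp
    push_cast [Fin.val_add, ZMod.natCast_mod]
    ring
  · rw [if_neg (fun hh => h (hiff.mp hh)), if_neg h]

/-- coefficient functionals (Fourier inversion) -/
def mFc (p : ℕ) [NeZero p] (a b : Fin p) : Matrix (Fin p) (Fin p) ℂ →ₗ[ℂ] ℂ where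
  toFun x := (p : ℂ)⁻¹ * ∑ j : Fin p, (mFω p)⁻¹ ^ (b.val * j.val) * x (j + a) j
  map_add' x y := by
    simp only [Matrix.add_apply, mul_add, Finset.sum_add_distrib]
  map_smul' r x := by
    simp only [Matrix.smul_apply, smul_eq_mul, RingHom.id_apply, Finset.mul_sum]
    exact Finset.sum_congr rfl fun j _ => by ring

lemma mFc_apply (p : ℕ) [NeZero p] (a b : Fin p) (x : Matrix (Fin p) (Fin p) ℂ) :
    mFc p a b x = (p : ℂ)⁻¹ * ∑ j : Fin p, (mFω p)⁻¹ ^ (b.val * j.val) * x (j + a) j := rfl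

lemma mFc_mFw (p : ℕ) [NeZero p] (a b a' b' : Fin p) :
    mFc p a b (mFw p a' b') = if a' = a ∧ b' = b then 1 else 0 := by
  have hp : p ≠ 0 := NeZero.ne p
  have hpC : (p : ℂ) ≠ 0 := Nat.cast_ne_zero.mpr hp
  rw [mFc_apply]
  simp only [mFw, Matrix.of_apply]
  by_cases ha : a' = a
  · subst ha
    simp only [eq_self_iff_true, if_true, true_and]
    have hsum : ∑ j : Fin p, (mFω p)⁻¹ ^ (b.val * j.val) * mFω p ^ (b'.val * j.val)
        = if b' = b then (p : ℂ) else 0 := by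
      rw [← mFω_ortho p hp b' b]
      exact Finset.sum_congr rfl fun j _ => by ring
    rw [hsum]
    by_cases hb : b' = b
    · simp [hb, inv_mul_cancel₀ hpC]
    · simp [hb]
  · have hfalse : ∀ j : Fin p, (j + a = j + a') = False := by
      intro j
      simp only [eq_iff_iff, iff_false]
      intro h
      exact ha (add_left_cancel h).symm
    simp only [hfalse, if_false, mul_zero, Finset.sum_const_zero, mul_zero]
    rw [if_neg (fun h => ha h.1)]

/-- Fourier reconstruction: the Weyl matrices span. -/
lemma mFw_recon (p : ℕ) [NeZero p] (x : Matrix (Fin p) (Fin p) ℂ) :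
    ∑ a : Fin p, ∑ b : Fin p, mFc p a b x • mFw p a b = x := by
  have hp : p ≠ 0 := NeZero.ne p
  have hpC : (p : ℂ) ≠ 0 := Nat.cast_ne_zero.mpr hp
  ext i j
  simp only [Matrix.sum_apply, Matrix.smul_apply, smul_eq_mul]
  simp only [mFw, Matrix.of_apply, mul_ite, mul_zero]
  have hcond : ∀ a : Fin p, (i = j + a) = (a = i - j) := by
    intro a
    simp only [eq_iff_iff]
    constructor
    · intro h; rw [h]; rw [add_sub_cancel_left]
    · intro h; rw [h]; rw [add_sub_cancel]
  simp only [hcond]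
  rw [Finset.sum_comm]
  rw [Finset.sum_congr rfl fun b _ => Finset.sum_ite_eq' Finset.univ (i - j)
    (fun a => mFc p a b x * mFω p ^ (b.val * j.val))]
  simp only [Finset.mem_univ, if_true, mFc_apply]
  have step : ∀ b : Fin p,
      (p : ℂ)⁻¹ * (∑ l : Fin p, (mFω p)⁻¹ ^ (b.val * l.val) * x (l + (i - j)) l) * mFω p ^ (b.val * j.val)
      = (p : ℂ)⁻¹ * ∑ l : Fin p, (mFω p ^ (b.val * j.val) * (mFω p)⁻¹ ^ (b.val * l.val)) * x (l + (i - j)) l := by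
    intro b
    rw [Finset.mul_sum, Finset.mul_sum, mul_comm, Finset.mul_sum]
    exact Finset.sum_congr rfl fun l _ => by ring
  rw [Finset.sum_congr rfl fun b _ => step b, ← Finset.mul_sum, Finset.sum_comm]
  have inner : ∀ l : Fin p,
      ∑ b : Fin p, (mFω p ^ (b.val * j.val) * (mFω p)⁻¹ ^ (b.val * l.val)) * x (l + (i - j)) l
      = (if j = l then (p : ℂ) else 0) * x (l + (i - j)) l := by
    intro l
    rw [← Finset.sum_mul, mFω_ortho p hp j l]
  rw [Finset.sum_congr rfl fun l _ => inner l]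
  simp only [ite_mul, zero_mul]
  rw [Finset.sum_ite_eq Finset.univ j (fun l => (p : ℂ) * x (l + (i - j)) l)]
  simp only [Finset.mem_univ, if_true]
  rw [← mul_assoc, inv_mul_cancel₀ hpC, one_mul]
  congr 1
  rw [add_comm, sub_add_cancel]

end MatFixAux

/-- Let `n ≥ 1` and `p` a prime with `p > n`. Consider the `n`-fold tensor
power `M_p(ℂ)^{⊗ n}` with the action `α` of `S_n` by `ℂ`-algebra automorphisms permuting
the tensor factors, `α_g (a_1 ⊗ ⋯ ⊗ a_n) = a_{g(1)} ⊗ ⋯ ⊗ a_{g(n)}`. Then there is an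
injective unital `ℂ`-algebra homomorphism from `M_p(ℂ)` into the fixed-point subalgebra
`(M_p(ℂ)^{⊗n})^{S_n}`, i.e. with range consisting of elements fixed by every `α_g`. -/
theorem matrix_embeds_into_fixed_points (n p : ℕ) (hn : 1 ≤ n) (hp : p.Prime)
    (hpn : n < p)
    (α : Equiv.Perm (Fin n) →
      ((⨂[ℂ] _ : Fin n, Matrix (Fin p) (Fin p) ℂ) ≃ₐ[ℂ]
        ⨂[ℂ] _ : Fin n, Matrix (Fin p) (Fin p) ℂ))
    (hα : ∀ (g : Equiv.Perm (Fin n)) (a : Fin n → Matrix (Fin p) (Fin p) ℂ),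
      α g (PiTensorProduct.tprod ℂ a) = PiTensorProduct.tprod ℂ (fun i => a (g i))) :
    ∃ φ : Matrix (Fin p) (Fin p) ℂ →ₐ[ℂ] ⨂[ℂ] _ : Fin n, Matrix (Fin p) (Fin p) ℂ,
      Function.Injective φ ∧
        ∀ (g : Equiv.Perm (Fin n)) (x : Matrix (Fin p) (Fin p) ℂ),
          α g (φ x) = φ x := by
  classical
  haveI : NeZero p := ⟨hp.ne_zero⟩
  haveI : Fact p.Prime := ⟨hp⟩
  have hp0 : p ≠ 0 := hp.ne_zero
  -- k = n⁻¹ mod p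
  have hnZ : (n : ZMod p) ≠ 0 := by
    rw [Ne, ZMod.natCast_eq_zero_iff]
    intro h
    exact absurd (Nat.le_of_dvd (Nat.lt_of_lt_of_le Nat.zero_lt_one hn) h) (not_le.mpr hpn)
  set kz : ZMod p := (n : ZMod p)⁻¹ with hkz
  set k : Fin p := ⟨kz.val, ZMod.val_lt kz⟩ with hk
  have hkval : ((k.val : ℕ) : ZMod p) = (n : ZMod p)⁻¹ := by
    rw [hk]
    exact ZMod.natCast_rightInverse kz
  -- the symmetric tensors
  set T : Fin p → Fin p → (⨂[ℂ] _ : Fin n, Matrix (Fin p) (Fin p) ℂ) :=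
    fun a b => PiTensorProduct.tprod ℂ (fun _ : Fin n => mFw p a (k * b)) with hT
  -- the linear map
  set φL : Matrix (Fin p) (Fin p) ℂ →ₗ[ℂ] (⨂[ℂ] _ : Fin n, Matrix (Fin p) (Fin p) ℂ) :=
    ∑ a : Fin p, ∑ b : Fin p, LinearMap.smulRight (mFc p a b) (T a b) with hφL
  have hφL_apply : ∀ x, φL x = ∑ a : Fin p, ∑ b : Fin p, mFc p a b x • T a b := by
    intro x
    rw [hφL]
    simp [LinearMap.sum_apply, LinearMap.smulRight_apply]
  have hφL_mFw : ∀ a b : Fin p, φL (mFw p a b) = T a b := by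
    intro a b
    rw [hφL_apply]
    simp only [mFc_mFw, ite_smul, one_smul, zero_smul]
    rw [Finset.sum_eq_single a]
    · rw [Finset.sum_eq_single b]
      · simp
      · intro b' _ hb'
        exact if_neg (fun hc => hb' hc.2.symm)
      · intro h; exact absurd (Finset.mem_univ b) h
    · intro a' _ ha'
      exact Finset.sum_eq_zero fun b' _ => if_neg (fun hc => ha' hc.1.symm)
    · intro h; exact absurd (Finset.mem_univ a) h
  -- the key scalar identity
  have hscalar : ∀ b c : Fin p,
      (mFω p ^ ((k * b).val * c.val)) ^ n = mFω p ^ (b.val * c.val) := by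
    intro b c
    rw [← pow_mul]
    apply mFω_pow_congr p hp0
    apply (ZMod.natCast_eq_natCast_iff _ _ _).mp
    push_cast [Fin.val_mul, ZMod.natCast_mod]
    rw [hkval]
    field_simp
  -- multiplicativity on Weyl matrices
  have hkey : ∀ a b c d : Fin p, φL (mFw p a b * mFw p c d) = φL (mFw p a b) * φL (mFw p c d) := by
    intro a b c d
    rw [mFw_mul, map_smul, hφL_mFw, hφL_mFw, hφL_mFw, hT]
    simp only
    rw [PiTensorProduct.tprod_mul_tprod]
    have hfun : (fun _ : Fin n => mFw p a (k * b)) * (fun _ : Fin n => mFw p c (k * d))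
        = fun _ : Fin n => mFω p ^ ((k * b).val * c.val) • mFw p (a + c) (k * b + k * d) := by
      funext i
      exact mFw_mul p a (k * b) c (k * d)
    rw [hfun]
    have hsmul : (PiTensorProduct.tprod ℂ
        (fun _ : Fin n => mFω p ^ ((k * b).val * c.val) • mFw p (a + c) (k * b + k * d)))
        = (∏ _i : Fin n, mFω p ^ ((k * b).val * c.val)) •
          PiTensorProduct.tprod ℂ (fun _ : Fin n => mFw p (a + c) (k * b + k * d)) := by
      exact MultilinearMap.map_smul_univ _ (fun _ => mFω p ^ ((k * b).val * c.val))
        (fun _ => mFw p (a + c) (k * b + k * d))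
    rw [hsmul, Finset.prod_const, Finset.card_univ, Fintype.card_fin, hscalar b c,
      mul_add k b d]
  -- scalar moves across multiplication (avoid instance-diamond issues)
  have hsmul_mul : ∀ (c : ℂ) (u v : ⨂[ℂ] _ : Fin n, Matrix (Fin p) (Fin p) ℂ),
      (c • u) * v = c • (u * v) := by
    intro c u v
    rw [PiTensorProduct.mul_def, PiTensorProduct.mul_def, map_smul, LinearMap.smul_apply]
  have hmul_smul : ∀ (c : ℂ) (u v : ⨂[ℂ] _ : Fin n, Matrix (Fin p) (Fin p) ℂ),
      u * (c • v) = c • (u * v) := by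
    intro c u v
    rw [PiTensorProduct.mul_def, PiTensorProduct.mul_def, map_smul]
  -- φL is multiplicative
  have hmulw : ∀ (c d : Fin p) (x : Matrix (Fin p) (Fin p) ℂ),
      φL (x * mFw p c d) = φL x * φL (mFw p c d) := by
    intro c d x
    conv_lhs => rw [← mFw_recon p x]
    conv_rhs => rw [← mFw_recon p x]
    simp only [Finset.sum_mul, smul_mul_assoc, map_sum, map_smul, hkey, hsmul_mul]
  have hmul : ∀ x y, φL (x * y) = φL x * φL y := by
    intro x y
    conv_lhs => rw [← mFw_recon p y]
    conv_rhs => rw [← mFw_recon p y]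
    simp only [Finset.mul_sum, mul_smul_comm, map_sum, map_smul, hmulw, hmul_smul]
  -- φL is unital
  have hone : φL 1 = 1 := by
    rw [← mFw_zero_zero p, hφL_mFw, hT]
    simp only [mul_zero]
    rw [mFw_zero_zero p]
    exact (PiTensorProduct.one_def).symm
  set φ : Matrix (Fin p) (Fin p) ℂ →ₐ[ℂ] (⨂[ℂ] _ : Fin n, Matrix (Fin p) (Fin p) ℂ) :=
    AlgHom.ofLinearMap φL hone hmul with hφ
  -- nontriviality of the codomain
  have hnontriv : Nontrivial (⨂[ℂ] _ : Fin n, Matrix (Fin p) (Fin p) ℂ) := by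
    have i0 : Fin p := ⟨0, hp.pos⟩
    set ent : Matrix (Fin p) (Fin p) ℂ →ₗ[ℂ] ℂ :=
      { toFun := fun x => x i0 i0
        map_add' := fun x y => rfl
        map_smul' := fun r x => rfl } with hent
    set L := PiTensorProduct.lift
      ((MultilinearMap.mkPiAlgebra ℂ (Fin n) ℂ).compLinearMap (fun _ => ent)) with hL
    apply nontrivial_of_ne (1 : ⨂[ℂ] _ : Fin n, Matrix (Fin p) (Fin p) ℂ) 0
    intro h
    have h1 : L 1 = (1 : ℂ) := by
      rw [PiTensorProduct.one_def, hL, PiTensorProduct.lift.tprod]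
      simp [hent, Matrix.one_apply]
      exact (by rw [Matrix.one_apply_eq, one_pow] : ((1 : Matrix (Fin p) (Fin p) ℂ) i0 i0) ^ n = 1)
    rw [h, map_zero] at h1
    exact one_ne_zero h1.symm
  haveI := hnontriv
  refine ⟨φ, ?_, ?_⟩
  · exact RingHom.injective φ.toRingHom
  · intro g x
    have hφx : φ x = φL x := rfl
    rw [hφx, hφL_apply, map_sum]
    refine Finset.sum_congr rfl fun a _ => ?_
    rw [map_sum]
    refine Finset.sum_congr rfl fun b _ => ?_
    rw [map_smul]
    congr 1
    rw [hT]
    simp only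
    rw [hα g (fun _ => mFw p a (k * b))]
end

section
/- Let I be a nonempty finite index set, let d : I → ℕ satisfy d_i ≥ 2 for all i ∈ I, and let D = Π_{i ∈ I} M_{d_i}(ℂ) be the corresponding finite direct sum of complex matrix algebras. Then for any coprime integers p, q ≥ 2 there exists m ≥ 1 and an injective unital ℂ-algebra homomorphism from M_p(ℂ) × M_q(ℂ) into the m-fold tensor power D^{⊗m} over ℂ. -/
open scoped TensorProduct PiTensorProduct

noncomputable section Aux

set_option linter.unusedSectionVars false

variable {I : Type} [Fintype I] [DecidableEq I] (d : I → ℕ) (m : ℕ)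

/-- D = Π i, M_{d i}(ℂ) -/
abbrev DSum (d : I → ℕ) := (i : I) → Matrix (Fin (d i)) (Fin (d i)) ℂ

/-- index type of the f-component matrix algebra -/
abbrev TIdx (d : I → ℕ) (m : ℕ) (f : Fin m → I) := (k : Fin m) → Fin (d (f k))

/-- E = Π f, M_{T f}(ℂ) -/
abbrev ESum (d : I → ℕ) (m : ℕ) := (f : Fin m → I) → Matrix (TIdx d m f) (TIdx d m f) ℂ

/-- the canonical multilinear map D^m → E -/
def muMap : MultilinearMap ℂ (fun _ : Fin m => DSum d) (ESum d m) where
  toFun x := fun f => Matrix.of fun a b => ∏ k, x k (f k) (a k) (b k)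
  map_update_add' x i v w := by
    funext f
    ext a b
    have h : ∀ (y : DSum d) (k : Fin m),
        (Function.update x i y) k (f k) (a k) (b k)
          = Function.update (fun k => x k (f k) (a k) (b k)) i (y (f i) (a i) (b i)) k :=
      fun y k => Function.apply_update (fun k (v : DSum d) => v (f k) (a k) (b k)) x i y k
    simp only [Matrix.of_apply, Pi.add_apply, Matrix.add_apply, h,
      Finset.prod_update_of_mem (Finset.mem_univ i), add_mul]
  map_update_smul' x i c v := by
    funext f
    ext a b
    have h : ∀ (y : DSum d) (k : Fin m),
        (Function.update x i y) k (f k) (a k) (b k)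
          = Function.update (fun k => x k (f k) (a k) (b k)) i (y (f i) (a i) (b i)) k :=
      fun y k => Function.apply_update (fun k (v : DSum d) => v (f k) (a k) (b k)) x i y k
    simp only [Matrix.of_apply, Pi.smul_apply, Matrix.smul_apply, smul_eq_mul, h,
      Finset.prod_update_of_mem (Finset.mem_univ i), mul_assoc]

lemma muMap_apply (x : Fin m → DSum d) (f : Fin m → I) (a b : TIdx d m f) :
    muMap d m x f a b = ∏ k, x k (f k) (a k) (b k) := rfl

lemma prod_ite_one {κ : Type*} [Fintype κ] (P : κ → Prop) [DecidablePred P] :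
    (∏ k, if P k then (1 : ℂ) else 0) = if ∀ k, P k then 1 else 0 := by
  by_cases h : ∀ k, P k
  · simp [h]
  · push_neg at h
    obtain ⟨k, hk⟩ := h
    rw [if_neg (by push_neg; exact ⟨k, hk⟩)]
    exact Finset.prod_eq_zero (Finset.mem_univ k) (by simp [hk])

lemma muMap_one : muMap d m 1 = 1 := by
  funext f
  ext a b
  have : ∀ k : Fin m, (1 : DSum d) (f k) (a k) (b k) = if a k = b k then (1:ℂ) else 0 := by
    intro k; simp [Matrix.one_apply]
  simp only [muMap_apply, Pi.one_apply, this, prod_ite_one]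
  rw [Matrix.one_apply]
  congr 1
  simp [funext_iff]

lemma muMap_mul (x y : Fin m → DSum d) : muMap d m (x * y) = muMap d m x * muMap d m y := by
  funext f
  ext a b
  simp only [muMap_apply, Pi.mul_apply, Matrix.mul_apply]
  rw [Finset.prod_univ_sum, Fintype.piFinset_univ]
  exact Finset.sum_congr rfl (fun c _ => Finset.prod_mul_distrib)

/-- the canonical algebra hom Ψ : ⨂ D → E -/
def PsiHom : (⨂[ℂ] _ : Fin m, DSum d) →ₐ[ℂ] ESum d m :=
  PiTensorProduct.liftAlgHom (muMap d m) (muMap_one d m) (muMap_mul d m)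

lemma PsiHom_tprod (x : Fin m → DSum d) :
    PsiHom d m (PiTensorProduct.tprod ℂ x) = muMap d m x := by
  simp [PsiHom, PiTensorProduct.liftAlgHom]


/-- generator elements of D -/
def genD (i : I) (a b : Fin (d i)) : DSum d := Pi.single i (Matrix.single a b (1:ℂ))

lemma PsiHom_genD (f : Fin m → I) (a b : TIdx d m f) :
    PsiHom d m (PiTensorProduct.tprod ℂ fun k => genD d (f k) (a k) (b k))
      = Pi.single f (Matrix.single a b (1:ℂ)) := by
  rw [PsiHom_tprod]
  funext g
  by_cases hgf : g = f
  · subst hgf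
    ext u v
    rw [Pi.single_eq_same]
    have hk : ∀ k, genD d (g k) (a k) (b k) (g k) (u k) (v k)
        = if a k = u k ∧ b k = v k then (1:ℂ) else 0 := by
      intro k; simp [genD, Matrix.single]
    rw [muMap_apply]
    simp only [hk]
    rw [prod_ite_one]
    simp only [Matrix.single, Matrix.of_apply]
    congr 1
    simp [funext_iff, forall_and]
  · ext u v
    rw [Pi.single_eq_of_ne hgf, muMap_apply, Matrix.zero_apply]
    obtain ⟨k0, hk0⟩ := Function.ne_iff.mp hgf
    refine Finset.prod_eq_zero (Finset.mem_univ k0) ?_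
    simp [genD, Pi.single_eq_of_ne hk0]

/-- the index type for the decomposition of D -/
abbrev SIdx (d : I → ℕ) := (i : I) × (Fin (d i) × Fin (d i))

lemma single_sum {ι : Type*} [DecidableEq ι] {Z : ι → Type*} [∀ i, AddCommMonoid (Z i)]
    [∀ i, Module ℂ (Z i)] {κ : Type*} (s : Finset κ) (i : ι) (F : κ → Z i) :
    ∑ j ∈ s, Pi.single i (F j) = Pi.single i (∑ j ∈ s, F j) :=
  (map_sum (LinearMap.single ℂ Z i) F s).symm

lemma decompD (x : DSum d) :
    ∑ s : SIdx d, x s.1 s.2.1 s.2.2 • genD d s.1 s.2.1 s.2.2 = x := by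
  rw [← Finset.univ_sigma_univ, Finset.sum_sigma]
  have h1 : ∀ i, ∑ p : Fin (d i) × Fin (d i), x i p.1 p.2 • genD d i p.1 p.2
      = Pi.single i (x i) := by
    intro i
    have h2 : ∀ a b, x i a b • genD d i a b
        = Pi.single i (Matrix.single a b (x i a b)) := by
      intro a b
      rw [genD, ← Pi.single_smul, Matrix.smul_single, smul_eq_mul, mul_one]
    rw [Fintype.sum_prod_type]
    simp only [h2, single_sum]
    exact congrArg _ (Matrix.matrix_eq_sum_single (x i)).symm
  rw [Finset.sum_congr rfl (fun i _ => h1 i), Finset.univ_sum_single]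


/-- entry functional on E -/
def entryL (f : Fin m → I) (a b : TIdx d m f) : ESum d m →ₗ[ℂ] ℂ where
  toFun X := X f a b
  map_add' _ _ := rfl
  map_smul' _ _ := rfl

/-- the inverse linear map Φ : E → ⨂ D -/
def PhiMap : ESum d m →ₗ[ℂ] ⨂[ℂ] _ : Fin m, DSum d :=
  ∑ f : Fin m → I, ∑ a : TIdx d m f, ∑ b : TIdx d m f,
    LinearMap.smulRight (entryL d m f a b)
      (PiTensorProduct.tprod ℂ fun k => genD d (f k) (a k) (b k))

lemma PhiMap_apply (X : ESum d m) :
    PhiMap d m X = ∑ f : Fin m → I, ∑ a : TIdx d m f, ∑ b : TIdx d m f,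
      X f a b • PiTensorProduct.tprod ℂ fun k => genD d (f k) (a k) (b k) := by
  simp [PhiMap, entryL]
  rfl

lemma Psi_Phi (X : ESum d m) : PsiHom d m (PhiMap d m X) = X := by
  rw [PhiMap_apply]
  simp only [map_sum, map_smul, PsiHom_genD]
  have h2 : ∀ (f : Fin m → I) (a b : TIdx d m f),
      X f a b • Pi.single (M := fun f => Matrix (TIdx d m f) (TIdx d m f) ℂ) f
          (Matrix.single a b (1:ℂ))
        = Pi.single f (Matrix.single a b (X f a b)) := by
    intro f a b
    rw [← Pi.single_smul, Matrix.smul_single, smul_eq_mul, mul_one]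
  simp only [h2, single_sum]
  have h3 : ∀ f, (∑ a : TIdx d m f, ∑ b : TIdx d m f, Matrix.single a b (X f a b))
      = X f := fun f => (Matrix.matrix_eq_sum_single (X f)).symm
  simp only [h3, Finset.univ_sum_single]

/-- reindexing equivalence for the triple sum -/
def sigmaFunEquiv : ((f : Fin m → I) × (TIdx d m f × TIdx d m f)) ≃ (Fin m → SIdx d) where
  toFun t := fun k => ⟨t.1 k, t.2.1 k, t.2.2 k⟩
  invFun r := ⟨fun k => (r k).1, fun k => (r k).2.1, fun k => (r k).2.2⟩
  left_inv t := rfl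
  right_inv r := rfl

set_option maxHeartbeats 1000000 in
lemma Phi_Psi_tprod (x : Fin m → DSum d) :
    PhiMap d m (PsiHom d m (PiTensorProduct.tprod ℂ x)) = PiTensorProduct.tprod ℂ x := by
  rw [PsiHom_tprod, PhiMap_apply]
  have h1 : ∀ (f : Fin m → I) (a b : TIdx d m f),
      muMap d m x f a b • (PiTensorProduct.tprod ℂ fun k => genD d (f k) (a k) (b k))
        = PiTensorProduct.tprod ℂ
            (fun k => x k (f k) (a k) (b k) • genD d (f k) (a k) (b k)) := by
    intro f a b
    rw [muMap_apply, ← MultilinearMap.map_smul_univ]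
  simp only [h1]
  set G : (k : Fin m) → SIdx d → DSum d :=
    fun k s => x k s.1 s.2.1 s.2.2 • genD d s.1 s.2.1 s.2.2 with hG
  calc
    ∑ f : Fin m → I, ∑ a : TIdx d m f, ∑ b : TIdx d m f,
        PiTensorProduct.tprod ℂ (fun k => G k ⟨f k, a k, b k⟩)
      = ∑ t : (f : Fin m → I) × (TIdx d m f × TIdx d m f),
          PiTensorProduct.tprod ℂ (fun k => G k ⟨t.1 k, t.2.1 k, t.2.2 k⟩) := by
        rw [← Finset.univ_sigma_univ, Finset.sum_sigma]
        refine Finset.sum_congr rfl fun g _ => ?_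
        exact (Fintype.sum_prod_type (fun s : TIdx d m g × TIdx d m g =>
          PiTensorProduct.tprod ℂ fun k => G k ⟨g k, (s.1 k, s.2 k)⟩)).symm
    _ = ∑ r : Fin m → SIdx d, PiTensorProduct.tprod ℂ (fun k => G k (r k)) :=
        Fintype.sum_equiv (sigmaFunEquiv d m) _ _ (fun t => rfl)
    _ = PiTensorProduct.tprod ℂ (fun k => ∑ s : SIdx d, G k s) :=
        (MultilinearMap.map_sum _ G).symm
    _ = PiTensorProduct.tprod ℂ x :=
        congrArg _ (funext fun k => decompD d (x k))

lemma Phi_Psi (z : ⨂[ℂ] _ : Fin m, DSum d) : PhiMap d m (PsiHom d m z) = z := by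
  have h : (PhiMap d m).comp (PsiHom d m).toLinearMap = LinearMap.id := by
    apply PiTensorProduct.ext
    apply MultilinearMap.ext
    intro x
    exact Phi_Psi_tprod d m x
  exact LinearMap.congr_fun h z

lemma PsiHom_bijective : Function.Bijective (PsiHom d m) :=
  ⟨Function.LeftInverse.injective (g := PhiMap d m) (fun z => Phi_Psi d m z),
   fun X => ⟨PhiMap d m X, Psi_Phi d m X⟩⟩

/-- Ψ as an algebra isomorphism -/
def PsiEquiv : (⨂[ℂ] _ : Fin m, DSum d) ≃ₐ[ℂ] ESum d m :=
  AlgEquiv.ofBijective (PsiHom d m) (PsiHom_bijective d m)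

end Aux


noncomputable section Blk

lemma bd_smul_one {n a : ℕ} (c : ℂ) :
    (Matrix.blockDiagonal fun _ : Fin a => c • (1 : Matrix (Fin n) (Fin n) ℂ)) = c • 1 := by
  rw [show (fun _ : Fin a => c • (1 : Matrix (Fin n) (Fin n) ℂ)) = c • 1 from rfl,
    Matrix.blockDiagonal_smul, Matrix.blockDiagonal_one]

lemma bd_one {n a : ℕ} :
    (Matrix.blockDiagonal fun _ : Fin a => (1 : Matrix (Fin n) (Fin n) ℂ)) = 1 := by
  rw [show (fun _ : Fin a => (1 : Matrix (Fin n) (Fin n) ℂ)) = 1 from rfl,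
    Matrix.blockDiagonal_one]

/-- block diagonal embedding M_p × M_q → M_{ap+bq} -/
def blockHom (p q a b : ℕ) :
    (Matrix (Fin p) (Fin p) ℂ × Matrix (Fin q) (Fin q) ℂ) →ₐ[ℂ]
      Matrix ((Fin p × Fin a) ⊕ (Fin q × Fin b)) ((Fin p × Fin a) ⊕ (Fin q × Fin b)) ℂ where
  toFun X := Matrix.fromBlocks (Matrix.blockDiagonal fun _ => X.1) 0 0
    (Matrix.blockDiagonal fun _ => X.2)
  map_one' := by simp only [Prod.fst_one, Prod.snd_one]; rw [bd_one, bd_one, Matrix.fromBlocks_one]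
  map_mul' X Y := by
    simp [Matrix.fromBlocks_multiply, ← Matrix.blockDiagonal_mul]
  map_zero' := by
    simp only [Prod.fst_zero, Prod.snd_zero]
    rw [show (fun _ : Fin a => (0 : Matrix (Fin p) (Fin p) ℂ)) = 0 from rfl,
      show (fun _ : Fin b => (0 : Matrix (Fin q) (Fin q) ℂ)) = 0 from rfl,
      Matrix.blockDiagonal_zero, Matrix.blockDiagonal_zero, Matrix.fromBlocks_zero]
  map_add' X Y := by
    simp only [Prod.fst_add, Prod.snd_add,
      show (fun _ : Fin a => X.1 + Y.1) = (fun _ : Fin a => X.1) + (fun _ : Fin a => Y.1)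
        from rfl,
      show (fun _ : Fin b => X.2 + Y.2) = (fun _ : Fin b => X.2) + (fun _ : Fin b => Y.2)
        from rfl,
      Matrix.blockDiagonal_add, Matrix.fromBlocks_add]
    simp
  commutes' c := by
    simp only [Algebra.algebraMap_eq_smul_one, Prod.smul_fst, Prod.smul_snd,
      Prod.fst_one, Prod.snd_one, bd_smul_one]
    conv_rhs => rw [← Matrix.fromBlocks_one (l := Fin p × Fin a) (m := Fin q × Fin b) (α := ℂ)]
    rw [Matrix.fromBlocks_smul]
    simp

lemma blockHom_injective (p q a b : ℕ) (ha : 1 ≤ a) (hb : 1 ≤ b) :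
    Function.Injective (blockHom p q a b) := by
  rw [injective_iff_map_eq_zero]
  intro X hX
  have h1 : X.1 = 0 := by
    ext i j
    have := congrFun (congrFun hX (Sum.inl (i, ⟨0, ha⟩))) (Sum.inl (j, ⟨0, ha⟩))
    simpa [blockHom, Matrix.blockDiagonal_apply] using this
  have h2 : X.2 = 0 := by
    ext i j
    have := congrFun (congrFun hX (Sum.inr (i, ⟨0, hb⟩))) (Sum.inr (j, ⟨0, hb⟩))
    simpa [blockHom, Matrix.blockDiagonal_apply] using this
  exact Prod.ext h1 h2

lemma exists_rep (p q N : ℕ) (hp : 2 ≤ p) (hq : 2 ≤ q) (hpq : Nat.Coprime p q)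
    (hN : p * q < N) : ∃ a b : ℕ, 1 ≤ a ∧ 1 ≤ b ∧ N = p * a + q * b := by
  haveI : NeZero q := ⟨by omega⟩
  set u : ZMod q := (N : ZMod q) * (p : ZMod q)⁻¹ with hu
  set a : ℕ := if u.val = 0 then q else u.val with ha
  have hunit : IsUnit (p : ZMod q) := (ZMod.isUnit_iff_coprime p q).mpr hpq
  have haq : a ≤ q := by
    have := ZMod.val_lt u
    rw [ha]; split <;> omega
  have ha1 : 1 ≤ a := by
    rw [ha]; split <;> omega
  have hcast : (a : ZMod q) = u := by
    rw [ha]; split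
    · rename_i h
      rw [ZMod.natCast_self]
      exact ((ZMod.val_eq_zero u).mp h).symm
    · rw [ZMod.natCast_val, ZMod.cast_id]
  have key : ((a * p : ℕ) : ZMod q) = (N : ZMod q) := by
    push_cast
    rw [hcast, hu, mul_assoc, ZMod.inv_mul_of_unit _ hunit, mul_one]
  have hle : a * p ≤ N := le_trans (Nat.mul_le_mul_right p haq) (by rw [mul_comm]; omega)
  have hdvd : q ∣ N - a * p := by
    have : ((N - a * p : ℕ) : ZMod q) = 0 := by
      rw [Nat.cast_sub hle, key, sub_self]
    exact (ZMod.natCast_eq_zero_iff _ _).mp this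
  obtain ⟨b, hb⟩ := hdvd
  have hlt : a * p < N := lt_of_le_of_lt
    (Nat.mul_le_mul_right p haq) (by rw [mul_comm]; omega)
  have heq : N = q * b + a * p := (Nat.sub_eq_iff_eq_add hle).mp hb
  have hbpos : 1 ≤ b := by
    rcases Nat.eq_zero_or_pos b with h0 | h1
    · subst h0; omega
    · exact h1
  exact ⟨a, b, ha1, hbpos, by rw [heq]; ring⟩

end Blk

open scoped TensorProduct PiTensorProduct in
/-- Let `I` be a nonempty finite index set, `d : I → ℕ` with `d i ≥ 2` for
all `i`, and `D = Π i, M_{d i}(ℂ)` the corresponding finite direct sum of matrix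
algebras. Then for any coprime `p, q ≥ 2` there is `m ≥ 1` and an injective unital
`ℂ`-algebra homomorphism from `M_p(ℂ) × M_q(ℂ)` into the `m`-fold tensor power
`D^{⊗m}`. -/
theorem matrix_sum_embeds_tensor_power (I : Type) [Fintype I] [Nonempty I]
    (d : I → ℕ) (hd : ∀ i, 2 ≤ d i) (p q : ℕ) (hp : 2 ≤ p) (hq : 2 ≤ q)
    (hpq : Nat.Coprime p q) :
    ∃ m : ℕ, 1 ≤ m ∧
      ∃ φ : (Matrix (Fin p) (Fin p) ℂ × Matrix (Fin q) (Fin q) ℂ) →ₐ[ℂ]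
          ⨂[ℂ] _ : Fin m, ((i : I) → Matrix (Fin (d i)) (Fin (d i)) ℂ),
        Function.Injective φ := by
  haveI : DecidableEq I := Classical.decEq I
  set m : ℕ := p * q with hm
  have hm1 : 1 ≤ m := by rw [hm]; exact Nat.one_le_iff_ne_zero.mpr (by positivity)
  have hNf : ∀ f : Fin m → I, p * q < Fintype.card (TIdx d m f) := by
    intro f
    have hcard : Fintype.card (TIdx d m f) = ∏ k : Fin m, d (f k) := by
      simp [Fintype.card_pi]
    have h2m : 2 ^ m ≤ ∏ k : Fin m, d (f k) := by
      calc 2 ^ m = ∏ _k : Fin m, 2 := by simp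
        _ ≤ ∏ k : Fin m, d (f k) :=
          Finset.prod_le_prod (fun _ _ => by omega) (fun k _ => hd (f k))
    have : p * q < 2 ^ m := by rw [hm]; exact Nat.lt_two_pow_self (n := p * q)
    omega
  have hrep : ∀ f : Fin m → I, ∃ a b : ℕ, 1 ≤ a ∧ 1 ≤ b ∧
      Fintype.card (TIdx d m f) = p * a + q * b :=
    fun f => exists_rep p q _ hp hq hpq (hNf f)
  choose af bf haf hbf hcf using hrep
  have ecard : ∀ f : Fin m → I,
      Fintype.card ((Fin p × Fin (af f)) ⊕ (Fin q × Fin (bf f)))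
        = Fintype.card (TIdx d m f) := by
    intro f
    rw [hcf f]
    simp
  let e : ∀ f : Fin m → I, ((Fin p × Fin (af f)) ⊕ (Fin q × Fin (bf f))) ≃ TIdx d m f :=
    fun f => Fintype.equivOfCardEq (ecard f)
  let chi : (f : Fin m → I) →
      ((Matrix (Fin p) (Fin p) ℂ × Matrix (Fin q) (Fin q) ℂ) →ₐ[ℂ]
        Matrix (TIdx d m f) (TIdx d m f) ℂ) :=
    fun f => (Matrix.reindexAlgEquiv ℂ ℂ (e f)).toAlgHom.comp (blockHom p q (af f) (bf f))
  refine ⟨m, hm1, ((PsiEquiv d m).symm.toAlgHom.comp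
    (Pi.algHom ℂ _ chi)), ?_⟩
  have hchi : Function.Injective (Pi.algHom ℂ _ chi :
      (Matrix (Fin p) (Fin p) ℂ × Matrix (Fin q) (Fin q) ℂ) →ₐ[ℂ] ESum d m) := by
    intro X Y hXY
    have f0 : Fin m → I := fun _ => Classical.arbitrary I
    have h0 : chi f0 X = chi f0 Y := congrFun hXY f0
    have hinj : Function.Injective (chi f0) :=
      (Matrix.reindexAlgEquiv ℂ ℂ (e f0)).injective.comp
        (blockHom_injective p q (af f0) (bf f0) (haf f0) (hbf f0))
    exact hinj h0
  exact ((PsiEquiv d m).symm.injective).comp hchi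
end
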